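/- Fix M > 0 and 0 < ε ≤ 1/2. Define the Borel probability measures on [0,M]: ν̃ = (1/2)·δ_{M/2} + (1/2)·δ_M, μ₊ = (1/2 − ε)·δ_{M/2} + (1/2 + ε)·δ_M, and μ₋ = (1/2 + ε)·δ_{M/2} + (1/2 − ε)·δ_M. Then d_TV(ν̃,μ₊) = ε and d_TV(ν̃,μ₋) = ε, and for every price x ∈ [0,M], (1/2)·(opt(μ₊) − R(x,μ₊)) + (1/2)·(opt(μ₋) − R(x,μ₋)) ≥ M·ε/2. -/

import Mathlib

open MeasureTheory
open scoped Classical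

noncomputable section

/-- Expected pricing revenue `R(x,μ) = x · μ{ξ : ξ ≥ x}`. -/
def rev (x : ℝ) (μ : Measure ℝ) : ℝ := x * (μ {ξ : ℝ | x ≤ ξ}).toReal

/-- Optimal revenue `opt(μ) = sup_{x ∈ [0,M]} R(x,μ)`. -/
def optRev (M : ℝ) (μ : Measure ℝ) : ℝ := ⨆ x : Set.Icc (0:ℝ) M, rev x.1 μ

/-- Total variation distance: `sup` over Borel sets `A` of `|μ(A) - ν(A)|`. -/
def tvDist (μ ν : Measure ℝ) : ℝ :=
  ⨆ A : {A : Set ℝ // MeasurableSet A}, |(μ A.1).toReal - (ν A.1).toReal|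

lemma mix_apply (a b p q : ℝ) (ha : 0 ≤ a) (hb : 0 ≤ b) (s : Set ℝ) :
    ((ENNReal.ofReal a • Measure.dirac p + ENNReal.ofReal b • Measure.dirac q) s).toReal
      = (if p ∈ s then a else 0) + (if q ∈ s then b else 0) := by
  simp [Measure.dirac_apply, Set.indicator]
  by_cases hp : p ∈ s <;> by_cases hq : q ∈ s <;>
    simp [hp, hq, ENNReal.toReal_add, ENNReal.toReal_ofReal, ha, hb, ENNReal.ofReal_ne_top]

lemma rev_mix (a b p q x : ℝ) (ha : 0 ≤ a) (hb : 0 ≤ b) :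
    rev x (ENNReal.ofReal a • Measure.dirac p + ENNReal.ofReal b • Measure.dirac q)
      = x * ((if x ≤ p then a else 0) + (if x ≤ q then b else 0)) := by
  unfold rev
  rw [mix_apply a b p q ha hb]
  simp [Set.mem_setOf_eq]

lemma tv_aux (p q a b ε : ℝ) (hpq : p ≠ q) (ha : 0 ≤ a) (hb : 0 ≤ b)
    (hab : a + b = 1) (hbe : |1/2 - b| = ε) :
    tvDist (ENNReal.ofReal (1/2) • Measure.dirac p + ENNReal.ofReal (1/2) • Measure.dirac q)
           (ENNReal.ofReal a • Measure.dirac p + ENNReal.ofReal b • Measure.dirac q) = ε := by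
  have h2 : (0:ℝ) ≤ 1/2 := by norm_num
  have hε0 : 0 ≤ ε := hbe ▸ abs_nonneg _
  have habs := abs_le.mp hbe.le
  have hbound : ∀ A : {A : Set ℝ // MeasurableSet A},
      |(((ENNReal.ofReal (1/2) • Measure.dirac p + ENNReal.ofReal (1/2) • Measure.dirac q))
          A.1).toReal -
        (((ENNReal.ofReal a • Measure.dirac p + ENNReal.ofReal b • Measure.dirac q))
          A.1).toReal| ≤ ε := by
    intro A
    rw [mix_apply _ _ _ _ h2 h2, mix_apply _ _ _ _ ha hb]
    split_ifs <;> (rw [abs_le]; constructor <;> linarith)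
  refine le_antisymm (ciSup_le hbound) ?_
  have hp : p ∉ ({q} : Set ℝ) := by simpa using hpq
  have hval : (((ENNReal.ofReal (1/2) • Measure.dirac p + ENNReal.ofReal (1/2) • Measure.dirac q))
        ({q} : Set ℝ)).toReal -
      (((ENNReal.ofReal a • Measure.dirac p + ENNReal.ofReal b • Measure.dirac q))
        ({q} : Set ℝ)).toReal = 1/2 - b := by
    rw [mix_apply _ _ _ _ h2 h2, mix_apply _ _ _ _ ha hb]
    simp [hp]
  refine le_ciSup_of_le ⟨ε, ?_⟩ ⟨{q}, measurableSet_singleton q⟩ ?_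
  · rintro r ⟨A, rfl⟩; exact hbound A
  · rw [hval, hbe]

/-- Two-point Bayesian lower bound of order `Mε` for pricing under total variation
heterogeneity. -/
theorem pricing_tv_lower_bound
    (M ε : ℝ) (hM : 0 < M) (hε : 0 < ε) (hε2 : ε ≤ 1/2)
    (νt μp μm : Measure ℝ)
    (hνt : νt = ENNReal.ofReal (1/2) • Measure.dirac (M / 2) +
                ENNReal.ofReal (1/2) • Measure.dirac M)
    (hμp : μp = ENNReal.ofReal (1/2 - ε) • Measure.dirac (M / 2) +
                ENNReal.ofReal (1/2 + ε) • Measure.dirac M)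
    (hμm : μm = ENNReal.ofReal (1/2 + ε) • Measure.dirac (M / 2) +
                ENNReal.ofReal (1/2 - ε) • Measure.dirac M) :
    tvDist νt μp = ε ∧ tvDist νt μm = ε ∧
    ∀ x ∈ Set.Icc (0:ℝ) M,
      (1/2) * (optRev M μp - rev x μp) + (1/2) * (optRev M μm - rev x μm) ≥
        M * ε / 2 := by
  subst hνt hμp hμm
  have hε0 : (0:ℝ) ≤ ε := hε.le
  have ha : (0:ℝ) ≤ 1/2 - ε := by linarith
  have hb : (0:ℝ) ≤ 1/2 + ε := by linarith
  have hpq : M / 2 ≠ M := by intro h; linarith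
  refine ⟨tv_aux _ _ _ _ _ hpq ha hb (by ring)
      (by rw [show (1/2:ℝ) - (1/2 + ε) = -ε by ring, abs_neg, abs_of_nonneg hε0]),
    tv_aux _ _ _ _ _ hpq hb ha (by ring)
      (by rw [show (1/2:ℝ) - (1/2 - ε) = ε by ring, abs_of_nonneg hε0]), ?_⟩
  intro x hx
  obtain ⟨hx0, hxM⟩ := hx
  have bdd : ∀ (a b : ℝ), 0 ≤ a → 0 ≤ b →
      BddAbove (Set.range fun y : Set.Icc (0:ℝ) M =>
        rev y.1 (ENNReal.ofReal a • Measure.dirac (M/2) + ENNReal.ofReal b • Measure.dirac M)) := by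
    intro a b ha' hb'
    refine ⟨M * (a + b), ?_⟩
    rintro r ⟨y, rfl⟩
    have h1 := y.2.1
    have h2 := y.2.2
    simp only [rev_mix a b _ _ _ ha' hb']
    split_ifs <;> nlinarith
  have hMM : (M:ℝ) ∈ Set.Icc (0:ℝ) M := ⟨hM.le, le_rfl⟩
  have hM2 : (M/2:ℝ) ∈ Set.Icc (0:ℝ) M := ⟨by linarith, by linarith⟩
  have hnle : ¬ (M ≤ M/2) := by intro h; linarith
  have hoptp : M * (1/2 + ε) ≤ optRev M
      (ENNReal.ofReal (1/2 - ε) • Measure.dirac (M/2) + ENNReal.ofReal (1/2 + ε) • Measure.dirac M) := by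
    have := le_ciSup (bdd _ _ ha hb) (⟨M, hMM⟩ : Set.Icc (0:ℝ) M)
    rw [rev_mix _ _ _ _ _ ha hb, if_neg hnle, if_pos le_rfl] at this
    calc M * (1/2 + ε) = M * (0 + (1/2 + ε)) := by ring
    _ ≤ _ := this
  have hoptm : M / 2 ≤ optRev M
      (ENNReal.ofReal (1/2 + ε) • Measure.dirac (M/2) + ENNReal.ofReal (1/2 - ε) • Measure.dirac M) := by
    have := le_ciSup (bdd _ _ hb ha) (⟨M/2, hM2⟩ : Set.Icc (0:ℝ) M)
    rw [rev_mix _ _ _ _ _ hb ha, if_pos le_rfl, if_pos (by linarith : M/2 ≤ M)] at this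
    calc M / 2 = M/2 * ((1/2 + ε) + (1/2 - ε)) := by ring
    _ ≤ _ := this
  rw [rev_mix _ _ _ _ _ ha hb, rev_mix _ _ _ _ _ hb ha, if_pos hxM, if_pos hxM]
  by_cases hxc : x ≤ M/2
  · rw [if_pos hxc, if_pos hxc]
    nlinarith
  · rw [if_neg hxc, if_neg hxc]
    push_neg at hxc
    nlinarith [mul_nonneg (sub_nonneg.mpr hxM) hb, mul_nonneg (by linarith : (0:ℝ) ≤ x - M/2) hε0]

end
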